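/- arXiv:2511.15301 — 2 statements merged into one kernel-verified Lean document; each statement's English description precedes it below -/
import Mathlib

section
/- If x is a quadratic irrational of the form x = (p + √d)/q with d a nonsquare positive integer, then the complete quotients of the continued fraction of x take only finitely many values; consequently two complete quotients coincide and the continued fraction of x is eventually periodic. -/
/-- Complete quotients of the continued fraction of x : x₀ = x, x_{k+1} = 1/(x_k - ⌊x_k⌋). -/
noncomputable def cq (x : ℝ) : ℕ → ℝ
  | 0 => x
  | k + 1 => 1 / (cq x k - (⌊cq x k⌋ : ℝ))

/-- Partial quotients a_k = ⌊x_k⌋. -/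
noncomputable def pq (x : ℝ) (k : ℕ) : ℤ := ⌊cq x k⌋

namespace LagrangeAux

/-- Integer data of complete quotients: x_k = (P_k + √D)/Q_k. -/
noncomputable def PQ (x : ℝ) (D P0 Q0 : ℤ) : ℕ → ℤ × ℤ
  | 0 => (P0, Q0)
  | k + 1 =>
    let pr := PQ x D P0 Q0 k
    let P' := ⌊cq x k⌋ * pr.2 - pr.1
    (P', (D - P' ^ 2) / pr.2)

variable (x : ℝ) (D P0 Q0 : ℤ)

lemma invariant (hD : 0 ≤ D) (hsq : Irrational (Real.sqrt D))
    (hQ0 : Q0 ≠ 0) (hdvd : Q0 ∣ D - P0 ^ 2)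
    (hx : x = ((P0 : ℝ) + Real.sqrt D) / (Q0 : ℝ)) :
    ∀ k, (PQ x D P0 Q0 k).2 ≠ 0 ∧ (PQ x D P0 Q0 k).2 ∣ D - (PQ x D P0 Q0 k).1 ^ 2 ∧
      cq x k = (((PQ x D P0 Q0 k).1 : ℝ) + Real.sqrt D) / ((PQ x D P0 Q0 k).2 : ℝ) := by
  intro k
  induction k with
  | zero => exact ⟨hQ0, hdvd, hx⟩
  | succ k ih =>
    obtain ⟨hQ, hdv, hrep⟩ := ih
    set P : ℤ := (PQ x D P0 Q0 k).1 with hP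
    set Q : ℤ := (PQ x D P0 Q0 k).2 with hQdef
    set a : ℤ := ⌊cq x k⌋ with ha
    set P' : ℤ := a * Q - P with hP'
    have hdv' : Q ∣ D - P' ^ 2 := by
      have h1 : D - P' ^ 2 = (D - P ^ 2) - ((P' - P) * a) * Q := by
        rw [hP']; ring
      rw [h1]
      exact dvd_sub hdv (Dvd.dvd.mul_left (dvd_refl Q) _)
    set Q' : ℤ := (D - P' ^ 2) / Q with hQ'
    have hmul : Q' * Q = D - P' ^ 2 := Int.ediv_mul_cancel hdv'
    have hs2 : Real.sqrt D ^ 2 = (D : ℝ) := Real.sq_sqrt (by exact_mod_cast hD)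
    have hQ'ne : Q' ≠ 0 := by
      intro h0
      have hDP : (D : ℝ) = (P' : ℝ) ^ 2 := by
        have : D - P' ^ 2 = 0 := by rw [← hmul, h0, zero_mul]
        have : D = P' ^ 2 := by omega
        exact_mod_cast this
      have : Real.sqrt D = ((|P'| : ℤ) : ℝ) := by
        rw [hDP]
        push_cast
        exact Real.sqrt_sq_eq_abs _
      rw [this] at hsq
      exact hsq.ne_int |P'| rfl
    have hPQ1 : (PQ x D P0 Q0 (k+1)).1 = P' := by simp only [PQ]; rfl
    have hPQ2 : (PQ x D P0 Q0 (k+1)).2 = Q' := by simp only [PQ]; rfl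
    refine ⟨by rw [hPQ2]; exact hQ'ne, ?_, ?_⟩
    · rw [hPQ1, hPQ2]
      exact Dvd.intro Q (by linarith [hmul])
    · rw [hPQ1, hPQ2]
      have hirrk : Irrational (cq x k) := by
        rw [hrep]
        exact (hsq.intCast_add P).div_intCast hQ
      have hne : cq x k - (a : ℝ) ≠ 0 := sub_ne_zero.mpr (hirrk.ne_int a)
      have hsne : Real.sqrt D - (P' : ℝ) ≠ 0 := sub_ne_zero.mpr (hsq.ne_int P')
      have hQR : (Q : ℝ) ≠ 0 := Int.cast_ne_zero.mpr hQ
      have hQ'R : (Q' : ℝ) ≠ 0 := Int.cast_ne_zero.mpr hQ'ne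
      have hfr : cq x k - (a : ℝ) = (Real.sqrt D - (P' : ℝ)) / (Q : ℝ) := by
        rw [hrep, hP']
        push_cast
        field_simp
        ring
      show cq x (k+1) = _
      rw [show cq x (k+1) = 1 / (cq x k - (a : ℝ)) from rfl, hfr]
      rw [one_div_div]
      rw [div_eq_div_iff hsne hQ'R]
      have hmulR : (Q' : ℝ) * (Q : ℝ) = (D : ℝ) - (P' : ℝ) ^ 2 := by exact_mod_cast hmul
      linear_combination hmulR - hs2
  

/-- One step of Q·Q' = D - P'^2. -/
lemma Qmul (hD : 0 ≤ D) (hsq : Irrational (Real.sqrt D))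
    (hQ0 : Q0 ≠ 0) (hdvd : Q0 ∣ D - P0 ^ 2)
    (hx : x = ((P0 : ℝ) + Real.sqrt D) / (Q0 : ℝ)) (k : ℕ) :
    (PQ x D P0 Q0 (k+1)).2 * (PQ x D P0 Q0 k).2 = D - (PQ x D P0 Q0 (k+1)).1 ^ 2 := by
  obtain ⟨hQ, hdv, -⟩ := invariant x D P0 Q0 hD hsq hQ0 hdvd hx k
  set P : ℤ := (PQ x D P0 Q0 k).1 with hP
  set Q : ℤ := (PQ x D P0 Q0 k).2 with hQdef
  set a : ℤ := ⌊cq x k⌋ with ha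
  set P' : ℤ := a * Q - P with hP'
  have hdv' : Q ∣ D - P' ^ 2 := by
    have h1 : D - P' ^ 2 = (D - P ^ 2) - ((P' - P) * a) * Q := by rw [hP']; ring
    rw [h1]
    exact dvd_sub hdv (Dvd.dvd.mul_left (dvd_refl Q) _)
  have hPQ1 : (PQ x D P0 Q0 (k+1)).1 = P' := by simp only [PQ]; rfl
  have hPQ2 : (PQ x D P0 Q0 (k+1)).2 = (D - P' ^ 2) / Q := by simp only [PQ]; rfl
  rw [hPQ1, hPQ2]
  exact Int.ediv_mul_cancel hdv'

/-- The conjugate recurrence. -/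
lemma conj_rec (hD : 0 ≤ D) (hsq : Irrational (Real.sqrt D))
    (hQ0 : Q0 ≠ 0) (hdvd : Q0 ∣ D - P0 ^ 2)
    (hx : x = ((P0 : ℝ) + Real.sqrt D) / (Q0 : ℝ)) (k : ℕ) :
    (((PQ x D P0 Q0 (k+1)).1 : ℝ) - Real.sqrt D) / ((PQ x D P0 Q0 (k+1)).2 : ℝ) =
      1 / ((((PQ x D P0 Q0 k).1 : ℝ) - Real.sqrt D) / ((PQ x D P0 Q0 k).2 : ℝ) - (⌊cq x k⌋ : ℝ)) := by
  obtain ⟨hQ, hdv, hrep⟩ := invariant x D P0 Q0 hD hsq hQ0 hdvd hx k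
  obtain ⟨hQ', -, -⟩ := invariant x D P0 Q0 hD hsq hQ0 hdvd hx (k+1)
  have hmul := Qmul x D P0 Q0 hD hsq hQ0 hdvd hx k
  have hPQ1 : (PQ x D P0 Q0 (k+1)).1 = ⌊cq x k⌋ * (PQ x D P0 Q0 k).2 - (PQ x D P0 Q0 k).1 := by
    simp only [PQ]
  have hs2 : Real.sqrt D ^ 2 = (D : ℝ) := Real.sq_sqrt (by exact_mod_cast hD)
  have hQR : ((PQ x D P0 Q0 k).2 : ℝ) ≠ 0 := Int.cast_ne_zero.mpr hQ
  have hQ'R : ((PQ x D P0 Q0 (k+1)).2 : ℝ) ≠ 0 := Int.cast_ne_zero.mpr hQ'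
  have hne : -((PQ x D P0 Q0 (k+1)).1 : ℝ) - Real.sqrt D ≠ 0 := by
    intro h
    exact hsq.ne_int (-(PQ x D P0 Q0 (k+1)).1) (by push_cast; linarith)
  have hfr : (((PQ x D P0 Q0 k).1 : ℝ) - Real.sqrt D) / ((PQ x D P0 Q0 k).2 : ℝ) - (⌊cq x k⌋ : ℝ)
      = (-((PQ x D P0 Q0 (k+1)).1 : ℝ) - Real.sqrt D) / ((PQ x D P0 Q0 k).2 : ℝ) := by
    rw [hPQ1]
    push_cast
    field_simp
    ring
  rw [hfr, one_div_div, div_eq_div_iff hQ'R hne]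
  have hmulR : ((PQ x D P0 Q0 (k+1)).2 : ℝ) * ((PQ x D P0 Q0 k).2 : ℝ)
      = (D : ℝ) - ((PQ x D P0 Q0 (k+1)).1 : ℝ) ^ 2 := by exact_mod_cast hmul
  linear_combination -hmulR + hs2

/-- all complete quotients are irrational -/
lemma cq_irr (hD : 0 ≤ D) (hsq : Irrational (Real.sqrt D))
    (hQ0 : Q0 ≠ 0) (hdvd : Q0 ∣ D - P0 ^ 2)
    (hx : x = ((P0 : ℝ) + Real.sqrt D) / (Q0 : ℝ)) (k : ℕ) :
    Irrational (cq x k) := by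
  obtain ⟨hQ, -, hrep⟩ := invariant x D P0 Q0 hD hsq hQ0 hdvd hx k
  rw [hrep]
  exact (hsq.intCast_add _).div_intCast hQ

/-- complete quotients exceed one -/
lemma cq_gt_one (hx1 : 1 < x) (hirr : ∀ k, Irrational (cq x k)) (k : ℕ) :
    1 < cq x k := by
  cases k with
  | zero => exact hx1
  | succ k =>
    have hle : (⌊cq x k⌋ : ℝ) ≤ cq x k := Int.floor_le _
    have hne : cq x k - (⌊cq x k⌋ : ℝ) ≠ 0 := sub_ne_zero.mpr ((hirr k).ne_int _)
    have h0 : 0 < cq x k - (⌊cq x k⌋ : ℝ) := lt_of_le_of_ne (by linarith) (Ne.symm hne)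
    have h1 : cq x k - (⌊cq x k⌋ : ℝ) < 1 := by
      have := Int.lt_floor_add_one (cq x k); linarith
    exact one_lt_one_div h0 h1

/-- conjugate step: once negative, stays in (-1,0) -/
lemma conj_step (y y' a : ℝ) (ha : 1 ≤ a) (hy : y < 0) (hrec : y' = 1/(y - a)) :
    -1 < y' ∧ y' < 0 := by
  have ht : y - a < -1 := by linarith
  constructor
  · rw [hrec, lt_div_iff_of_neg (by linarith : y - a < 0)]
    linarith
  · rw [hrec]
    exact one_div_neg.mpr (by linarith)

/-- growth of the difference in the descent -/
lemma diff_grow (xk yk x' y' a : ℝ) (hu : 0 < xk - a) (hu1 : xk - a < 1)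
    (hv : 0 < yk - a) (hv1 : yk - a < 1) (hxy : xk ≠ yk)
    (hx' : x' = 1/(xk - a)) (hy' : y' = 1/(yk - a)) :
    |xk - yk| < |x' - y'| := by
  have hd : x' - y' = (yk - xk)/((xk - a)*(yk - a)) := by
    rw [hx', hy']
    field_simp
    ring
  rw [hd, abs_div, abs_of_pos (mul_pos hu hv), abs_sub_comm yk xk]
  have h0 : 0 < |xk - yk| := abs_pos.mpr (sub_ne_zero.mpr hxy)
  rw [lt_div_iff₀ (mul_pos hu hv)]
  have huv : (xk - a)*(yk - a) < 1 := by nlinarith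
  calc |xk - yk| * ((xk - a)*(yk - a)) < |xk - yk| * 1 :=
        mul_lt_mul_of_pos_left huv h0
    _ = |xk - yk| := mul_one _

lemma range_finite (hD : 0 < D) (hsq : Irrational (Real.sqrt D))
    (hQ0 : Q0 ≠ 0) (hdvd : Q0 ∣ D - P0 ^ 2)
    (hx : x = ((P0 : ℝ) + Real.sqrt D) / (Q0 : ℝ)) (hx1 : 1 < x) :
    (Set.range (cq x)).Finite := by
  have hD' : 0 ≤ D := hD.le
  have inv := invariant x D P0 Q0 hD' hsq hQ0 hdvd hx
  have hrec := conj_rec x D P0 Q0 hD' hsq hQ0 hdvd hx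
  have hirr := cq_irr x D P0 Q0 hD' hsq hQ0 hdvd hx
  have hgt1 := cq_gt_one x hx1 hirr
  set s : ℝ := Real.sqrt D with hs
  have hs0 : 0 < s := Real.sqrt_pos.mpr (by exact_mod_cast hD)
  set Pf : ℕ → ℤ := fun k => (PQ x D P0 Q0 k).1 with hPf
  set Qf : ℕ → ℤ := fun k => (PQ x D P0 Q0 k).2 with hQf
  set y : ℕ → ℝ := fun k => ((Pf k : ℝ) - s) / (Qf k : ℝ) with hy
  have ha1 : ∀ k, (1:ℤ) ≤ ⌊cq x k⌋ := fun k => Int.le_floor.mpr (by exact_mod_cast (hgt1 k).le)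
  have ha1R : ∀ k, (1:ℝ) ≤ (⌊cq x k⌋:ℝ) := fun k => by exact_mod_cast ha1 k
  have hfr0 : ∀ k, 0 < cq x k - (⌊cq x k⌋:ℝ) := by
    intro k
    have hle : (⌊cq x k⌋ : ℝ) ≤ cq x k := Int.floor_le _
    have hne : cq x k - (⌊cq x k⌋ : ℝ) ≠ 0 := sub_ne_zero.mpr ((hirr k).ne_int _)
    exact lt_of_le_of_ne (by linarith) (Ne.symm hne)
  have hfr1 : ∀ k, cq x k - (⌊cq x k⌋:ℝ) < 1 := by
    intro k
    have := Int.lt_floor_add_one (cq x k); linarith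
  have hcqrec : ∀ k, cq x (k+1) = 1/(cq x k - (⌊cq x k⌋:ℝ)) := fun k => rfl
  have hyrec : ∀ k, y (k+1) = 1/(y k - (⌊cq x k⌋:ℝ)) := fun k => hrec k
  have hQne : ∀ k, Qf k ≠ 0 := fun k => (inv k).1
  have hQneR : ∀ k, (Qf k : ℝ) ≠ 0 := fun k => Int.cast_ne_zero.mpr (hQne k)
  have hdiff : ∀ k, cq x k - y k = 2*s/(Qf k : ℝ) := by
    intro k
    rw [(inv k).2.2]
    show _ - ((Pf k : ℝ) - s) / (Qf k : ℝ) = _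
    rw [div_sub_div_same, div_eq_div_iff (hQneR k) (hQneR k)]
    ring
  have hyirr : ∀ k, Irrational (y k) := by
    intro k
    have := ((hsq.neg).intCast_add (Pf k)).div_intCast (hQne k)
    show Irrational (((Pf k : ℝ) - s) / (Qf k : ℝ))
    simpa [sub_eq_add_neg] using this
  have hxney : ∀ k, cq x k ≠ y k := by
    intro k h
    have h2 : 2*s/(Qf k:ℝ) ≠ 0 := div_ne_zero (by positivity) (hQneR k)
    apply h2
    rw [← hdiff k, h, sub_self]
  -- Step A: the conjugate eventually becomes negative
  have hex : ∃ k, y k < 0 := by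
    by_contra hcon
    push_neg at hcon
    have hypos : ∀ k, 0 < y k := fun k =>
      lt_of_le_of_ne (hcon k) (Ne.symm (by simpa using (hyirr k).ne_int 0))
    have h1 : ∀ k, 0 < y k - (⌊cq x k⌋:ℝ) := by
      intro k
      have h := hypos (k+1); rw [hyrec k] at h; exact one_div_pos.mp h
    have h2 : ∀ k, y k - (⌊cq x k⌋:ℝ) < 1 := by
      intro k
      have hv := h1 k
      have hgt : 1 < y (k+1) := by
        have h3 := h1 (k+1); have h4 := ha1R (k+1); linarith
      rw [hyrec k] at hgt
      have hmul : (y k - (⌊cq x k⌋:ℝ)) * (1/(y k - (⌊cq x k⌋:ℝ))) = 1 :=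
        mul_one_div_cancel hv.ne'
      nlinarith
    have hQdec : ∀ k, (Qf (k+1)).natAbs < (Qf k).natAbs := by
      intro k
      have hgrow := diff_grow (cq x k) (y k) (cq x (k+1)) (y (k+1)) ((⌊cq x k⌋:ℝ))
          (hfr0 k) (hfr1 k) (h1 k) (h2 k) (hxney k) (hcqrec k) (hyrec k)
      rw [hdiff k, hdiff (k+1), abs_div, abs_div,
        abs_of_pos (by positivity : (0:ℝ) < 2*s)] at hgrow
      have hq1 : (0:ℝ) < |(Qf k : ℝ)| := abs_pos.mpr (hQneR k)
      have hq2 : (0:ℝ) < |(Qf (k+1) : ℝ)| := abs_pos.mpr (hQneR (k+1))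
      have habs : |(Qf (k+1) : ℝ)| < |(Qf k : ℝ)| := by
        rw [div_lt_div_iff₀ hq1 hq2] at hgrow
        nlinarith
      have hnat : ((Qf (k+1)).natAbs : ℝ) < ((Qf k).natAbs : ℝ) := by
        rw [Nat.cast_natAbs, Nat.cast_natAbs]
        exact_mod_cast habs
      exact_mod_cast hnat
    have hmono : ∀ k, (Qf k).natAbs + k ≤ (Qf 0).natAbs := by
      intro k
      induction k with
      | zero => simp
      | succ k ih => have := hQdec k; omega
    have hend := hmono ((Qf 0).natAbs + 1)
    have hpos0 : 0 < (Qf ((Qf 0).natAbs + 1)).natAbs := Int.natAbs_pos.mpr (hQne _)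
    omega
  obtain ⟨k₀, hk₀⟩ := hex
  set K := k₀ + 1 with hK
  -- Step B: conjugate trapped in (-1,0) from K on
  have hybnd : ∀ j, -1 < y (K + j) ∧ y (K + j) < 0 := by
    intro j
    induction j with
    | zero => exact conj_step (y k₀) (y (k₀+1)) _ (ha1R k₀) hk₀ (hyrec k₀)
    | succ j ih =>
      exact conj_step (y (K+j)) (y (K+j+1)) _ (ha1R (K+j)) ih.2 (hyrec (K+j))
  -- Step C: bounds on P, Q
  set B : ℤ := ⌊s⌋ with hB
  have hbnd : ∀ k, K ≤ k → ((1:ℤ),(1:ℤ)) ≤ (Pf k, Qf k) ∧ (Pf k, Qf k) ≤ (B, 2*B) := by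
    intro k hk
    obtain ⟨j, rfl⟩ : ∃ j, k = K + j := ⟨k - K, by omega⟩
    obtain ⟨hym1, hy0⟩ := hybnd j
    have hx1k := hgt1 (K + j)
    have hdk := hdiff (K + j)
    have hQpos : (0:ℝ) < (Qf (K+j) : ℝ) := by
      by_contra hle
      push_neg at hle
      have hlt : (Qf (K+j):ℝ) < 0 := lt_of_le_of_ne hle (hQneR (K+j))
      have : 2*s/(Qf (K+j):ℝ) < 0 := div_neg_of_pos_of_neg (by positivity) hlt
      linarith
    have hQposZ : 0 < Qf (K+j) := by exact_mod_cast hQpos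
    have hPlt : (Pf (K+j) : ℝ) < s := by
      have hh : ((Pf (K+j):ℝ) - s)/(Qf (K+j):ℝ) < 0 := hy0
      rw [div_neg_iff] at hh
      rcases hh with ⟨h1', h2'⟩ | ⟨h1', h2'⟩
      · linarith
      · linarith
    have hPles : Pf (K+j) ≤ B := Int.le_floor.mpr hPlt.le
    have hsum : cq x (K+j) + y (K+j) = 2*(Pf (K+j):ℝ)/(Qf (K+j):ℝ) := by
      rw [(inv (K+j)).2.2]
      show _ + ((Pf (K+j) : ℝ) - s) / (Qf (K+j) : ℝ) = _
      rw [← add_div, div_eq_div_iff (hQneR (K+j)) (hQneR (K+j))]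
      ring
    have hPpos : 0 < Pf (K+j) := by
      have h0 : 0 < 2*(Pf (K+j):ℝ)/(Qf (K+j):ℝ) := by rw [← hsum]; linarith
      rw [div_pos_iff] at h0
      rcases h0 with ⟨h1', h2'⟩ | ⟨h1', h2'⟩
      · have : (0:ℝ) < (Pf (K+j):ℝ) := by linarith
        exact_mod_cast this
      · linarith
    have hsB : s < (B:ℝ) + 1 := Int.lt_floor_add_one s
    have hQlt : (Qf (K+j):ℝ) < (Pf (K+j):ℝ) + s := by
      have hxk : 1 < ((Pf (K+j):ℝ) + s)/(Qf (K+j):ℝ) := by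
        rw [← (inv (K+j)).2.2]; exact hx1k
      rw [lt_div_iff₀ hQpos] at hxk; linarith
    have hQle : Qf (K+j) ≤ 2*B := by
      have hPB : (Pf (K+j):ℝ) ≤ (B:ℝ) := by exact_mod_cast hPles
      have hcast : (Qf (K+j):ℝ) < ((2*B+1:ℤ):ℝ) := by push_cast; linarith
      have : Qf (K+j) < 2*B+1 := by exact_mod_cast hcast
      omega
    exact ⟨Prod.mk_le_mk.mpr ⟨hPpos, hQposZ⟩, Prod.mk_le_mk.mpr ⟨hPles, hQle⟩⟩
  -- assemble
  have hsubset : Set.range (cq x) ⊆ (cq x '' Set.Iio K) ∪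
      ((fun pr : ℤ × ℤ => ((pr.1 : ℝ) + s)/((pr.2 : ℤ) : ℝ)) ''
        ↑(Finset.Icc ((1:ℤ),(1:ℤ)) (B, 2*B))) := by
    rintro - ⟨k, rfl⟩
    by_cases hk : k < K
    · exact Or.inl ⟨k, hk, rfl⟩
    · refine Or.inr ⟨(Pf k, Qf k), ?_, ((inv k).2.2).symm⟩
      rw [Finset.mem_coe, Finset.mem_Icc]
      exact hbnd k (le_of_not_gt hk)
  exact Set.Finite.subset (((Set.finite_Iio K).image _).union
    ((Finset.Icc _ _).finite_toSet.image _)) hsubset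

lemma cq_shift (x : ℝ) (n m : ℕ) (h : cq x n = cq x m) :
    ∀ j, cq x (n + j) = cq x (m + j) := by
  intro j
  induction j with
  | zero => simpa using h
  | succ j ih =>
    show cq x ((n + j) + 1) = cq x ((m + j) + 1)
    rw [show cq x ((n+j)+1) = 1/(cq x (n+j) - (⌊cq x (n+j)⌋:ℝ)) from rfl,
      show cq x ((m+j)+1) = 1/(cq x (m+j) - (⌊cq x (m+j)⌋:ℝ)) from rfl, ih]

end LagrangeAux

/-- Theaetetus/Lagrange: if x = (p + √d)/q is a quadratic irrational (d a nonsquare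
positive integer), then the complete quotients take only finitely many values, hence two
of them coincide, and the continued fraction of x is eventually periodic. -/
theorem quadratic_irrational_periodic_cf (d : ℕ) (hd0 : 0 < d)
    (hd : ¬∃ m : ℕ, m * m = d) (p q : ℤ) (hq : q ≠ 0) (x : ℝ)
    (hx : x = ((p : ℝ) + Real.sqrt d) / (q : ℝ)) (hx1 : 1 < x) (hirr : Irrational x) :
    (Set.range (cq x)).Finite ∧
    (∃ n m, n < m ∧ cq x n = cq x m) ∧
    (∃ m per, 1 ≤ per ∧ ∀ k ≥ m, pq x (k + per) = pq x k) := by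
  have hqR : ((q:ℝ)) ≠ 0 := Int.cast_ne_zero.mpr hq
  -- irrationality of √d
  have hsd : Irrational (Real.sqrt d) := by
    have he : Real.sqrt d = x * q - p := by
      rw [hx]; field_simp; ring
    rw [he]
    exact (hirr.mul_intCast hq).sub_intCast p
  -- the data
  set D : ℤ := (d:ℤ) * q^2 with hD
  set P0 : ℤ := p * |q| with hP0
  set Q0 : ℤ := q * |q| with hQ0def
  have hDpos : 0 < D := by positivity
  have hsqrtD : Real.sqrt (D:ℝ) = Real.sqrt d * |(q:ℝ)| := by
    rw [hD]
    push_cast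
    rw [Real.sqrt_mul (by positivity), Real.sqrt_sq_eq_abs]
  have hsqD : Irrational (Real.sqrt (D:ℝ)) := by
    rw [hsqrtD, ← Int.cast_abs]
    exact hsd.mul_intCast (by simpa using hq)
  have hQ0 : Q0 ≠ 0 := by
    rw [hQ0def]
    exact mul_ne_zero hq (by simpa using hq)
  have hdvd : Q0 ∣ D - P0 ^ 2 := by
    have h1 : D - P0 ^ 2 = (q*q) * ((d:ℤ) - p^2) := by
      rw [hD, hP0, mul_pow, sq_abs]; ring
    rw [h1, ← abs_dvd, hQ0def, abs_mul, abs_abs, abs_mul_abs_self]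
    exact dvd_mul_right _ _
  have hxrep : x = ((P0 : ℝ) + Real.sqrt (D:ℝ)) / (Q0 : ℝ) := by
    rw [hx, hsqrtD, hP0, hQ0def]
    push_cast
    have habs : |(q:ℝ)| ≠ 0 := by simpa using hqR
    field_simp
  have hfin : (Set.range (cq x)).Finite :=
    LagrangeAux.range_finite x D P0 Q0 hDpos hsqD hQ0 hdvd hxrep hx1
  refine ⟨hfin, ?_⟩
  -- pigeonhole
  haveI : Finite ↥(Set.range (cq x)) := hfin.to_subtype
  obtain ⟨a, b, hne, heq⟩ := Finite.exists_ne_map_eq_of_infinite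
    (fun k : ℕ => (⟨cq x k, Set.mem_range_self k⟩ : ↥(Set.range (cq x))))
  have heq' : cq x a = cq x b := by
    simpa [Subtype.ext_iff] using heq
  obtain ⟨n, m, hnm, hcq⟩ : ∃ n m, n < m ∧ cq x n = cq x m := by
    rcases lt_or_gt_of_ne hne with h | h
    · exact ⟨a, b, h, heq'⟩
    · exact ⟨b, a, h, heq'.symm⟩
  refine ⟨⟨n, m, hnm, hcq⟩, n, m - n, by omega, ?_⟩
  intro k hk
  unfold pq
  congr 1
  have e1 : k + (m - n) = m + (k - n) := by omega
  have e2 : k = n + (k - n) := by omega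
  calc cq x (k + (m - n)) = cq x (m + (k - n)) := by rw [e1]
    _ = cq x (n + (k - n)) := (LagrangeAux.cq_shift x n m hcq (k - n)).symm
    _ = cq x k := by rw [← e2]
end

section
/- Conversely, if the continued fraction expansion of an irrational x > 0 is eventually periodic, then x is a quadratic irrational: x satisfies a polynomial equation of degree 2 with integer coefficients. -/
lemma cq_succ (x : ℝ) (k : ℕ) : cq x (k + 1) = (Int.fract (cq x k))⁻¹ := by
  rw [cq, Int.fract, one_div]

lemma cq_irr {x : ℝ} (hx : Irrational x) : ∀ k, Irrational (cq x k)
  | 0 => hx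
  | k + 1 => by
    rw [cq_succ]
    exact ((cq_irr hx k).sub_intCast _).inv

lemma fract_cq_ne_zero {x : ℝ} (hx : Irrational x) (k : ℕ) : Int.fract (cq x k) ≠ 0 := by
  have := (cq_irr hx k).sub_intCast ⌊cq x k⌋
  intro hz
  exact this.ne_zero (by rwa [Int.fract] at hz)

lemma cq_add (x : ℝ) (m k : ℕ) : cq x (m + k) = cq (cq x m) k := by
  induction k with
  | zero => rfl
  | succ k ih => rw [← Nat.add_assoc, cq_succ, ih, cq_succ]

lemma pq_add (x : ℝ) (m k : ℕ) : pq x (m + k) = pq (cq x m) k := by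
  rw [pq, pq, cq_add]

open GenContFract GenContFract.IntFractPair in
lemma stream_eq {x : ℝ} (hx : Irrational x) :
    ∀ k, IntFractPair.stream x k = some ⟨pq x k, Int.fract (cq x k)⟩
  | 0 => rfl
  | k + 1 => by
    rw [IntFractPair.stream_succ_of_some (stream_eq hx k) (fract_cq_ne_zero hx k)]
    simp only [IntFractPair.of, cq_succ, pq]

open GenContFract GenContFract.IntFractPair in
lemma of_eq_of_pq_eq {u v : ℝ} (hu : Irrational u) (hv : Irrational v)
    (hpq : ∀ k, pq u k = pq v k) : GenContFract.of u = GenContFract.of v := by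
  have hh : (GenContFract.of u).h = (GenContFract.of v).h := by
    rw [of_h_eq_floor, of_h_eq_floor]
    exact_mod_cast hpq 0
  have hs : (GenContFract.of u).s = (GenContFract.of v).s := by
    apply Stream'.Seq.ext
    intro n
    rw [get?_of_eq_some_of_succ_get?_intFractPair_stream (stream_eq hu (n + 1)),
      get?_of_eq_some_of_succ_get?_intFractPair_stream (stream_eq hv (n + 1))]
    simp [hpq (n + 1)]
  cases hof : GenContFract.of u
  cases hof' : GenContFract.of v
  simp_all

lemma eq_of_pq_eq {u v : ℝ} (hu : Irrational u) (hv : Irrational v)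
    (hpq : ∀ k, pq u k = pq v k) : u = v := by
  have h1 := GenContFract.of_convergence u (K := ℝ)
  have h2 := GenContFract.of_convergence v (K := ℝ)
  rw [of_eq_of_pq_eq hu hv hpq] at h1
  exact tendsto_nhds_unique h1 h2

/-- Continuant numerators, shifted: `cN x 0 = p₋₂ = 0`, `cN x 1 = p₋₁ = 1`. -/
noncomputable def cN (x : ℝ) : ℕ → ℤ
  | 0 => 0
  | 1 => 1
  | k + 2 => pq x k * cN x (k + 1) + cN x k

/-- Continuant denominators, shifted: `cD x 0 = q₋₂ = 1`, `cD x 1 = q₋₁ = 0`. -/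
noncomputable def cD (x : ℝ) : ℕ → ℤ
  | 0 => 1
  | 1 => 0
  | k + 2 => pq x k * cD x (k + 1) + cD x k

lemma cq_pos {x : ℝ} (hx : 0 < x) (hirr : Irrational x) : ∀ k, 0 < cq x k
  | 0 => hx
  | k + 1 => by
    rw [cq_succ]
    exact inv_pos.mpr (lt_of_le_of_ne (Int.fract_nonneg _) (Ne.symm (fract_cq_ne_zero hirr k)))

lemma one_lt_cq_succ {x : ℝ} (hirr : Irrational x) (k : ℕ) : 1 < cq x (k + 1) := by
  rw [cq_succ]
  have h1 : 0 < Int.fract (cq x k) :=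
    lt_of_le_of_ne (Int.fract_nonneg _) (Ne.symm (fract_cq_ne_zero hirr k))
  exact (one_lt_inv_iff₀).mpr ⟨h1, Int.fract_lt_one _⟩

lemma pq_succ_pos {x : ℝ} (hirr : Irrational x) (k : ℕ) : 1 ≤ pq x (k + 1) :=
  Int.le_floor.mpr (by exact_mod_cast (one_lt_cq_succ hirr k).le)

lemma pq_nonneg {x : ℝ} (hx : 0 < x) (hirr : Irrational x) : ∀ k, 0 ≤ pq x k
  | 0 => Int.le_floor.mpr (by exact_mod_cast hx.le)
  | k + 1 => le_trans one_pos.le (pq_succ_pos hirr k)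

lemma cD_nonneg {x : ℝ} (hx : 0 < x) (hirr : Irrational x) : ∀ k, 0 ≤ cD x k
  | 0 => one_pos.le
  | 1 => le_refl 0
  | k + 2 => by
    rw [cD]
    have := pq_nonneg hx hirr k
    have := cD_nonneg hx hirr (k + 1)
    have := cD_nonneg hx hirr k
    positivity

lemma cD_ge_one {x : ℝ} (hx : 0 < x) (hirr : Irrational x) : ∀ k, 1 ≤ cD x (k + 2)
  | 0 => by rw [cD]; simp [cD]
  | k + 1 => by
    rw [cD]
    have h1 := pq_succ_pos hirr k
    have h2 := cD_ge_one hx hirr k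
    have h3 := cD_nonneg hx hirr (k + 1)
    nlinarith

lemma cq_recip {x : ℝ} (hirr : Irrational x) (k : ℕ) :
    cq x k = (pq x k : ℝ) + (cq x (k + 1))⁻¹ := by
  rw [cq_succ, inv_inv, Int.fract, pq]
  ring

lemma cq_key {x : ℝ} (hirr : Irrational x) : ∀ k,
    x * ((cD x (k + 1) : ℝ) * cq x k + (cD x k : ℝ)) =
      (cN x (k + 1) : ℝ) * cq x k + (cN x k : ℝ)
  | 0 => by simp [cD, cN, cq]
  | k + 1 => by
    have hu : cq x (k + 1) ≠ 0 := (cq_irr hirr (k + 1)).ne_zero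
    have hck := cq_recip hirr k
    have ih := cq_key hirr k
    have e1 : x * ((cD x (k + 2) : ℝ) * cq x (k + 1) + (cD x (k + 1) : ℝ)) =
        cq x (k + 1) * (x * ((cD x (k + 1) : ℝ) * cq x k + (cD x k : ℝ))) := by
      rw [hck, cD]
      push_cast
      linear_combination (-(x * (cD x (k + 1) : ℝ))) * mul_inv_cancel₀ hu
    have e2 : cq x (k + 1) * ((cN x (k + 1) : ℝ) * cq x k + (cN x k : ℝ)) =
        (cN x (k + 2) : ℝ) * cq x (k + 1) + (cN x (k + 1) : ℝ) := by
      rw [hck, cN]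
      push_cast
      linear_combination ((cN x (k + 1) : ℝ)) * mul_inv_cancel₀ hu
    rw [e1, ih, e2]

lemma cq_det (x : ℝ) : ∀ k, cN x (k + 1) * cD x k - cN x k * cD x (k + 1) = (-1 : ℤ) ^ k
  | 0 => by simp [cD, cN]
  | k + 1 => by
    have ih := cq_det x k
    rw [cN, cD, pow_succ]
    ring_nf
    ring_nf at ih
    linarith

lemma irr_linear {x : ℝ} (hirr : Irrational x) {P Q : ℤ} (hQ : Q ≠ 0) :
    x * (Q : ℝ) - (P : ℝ) ≠ 0 := by
  intro h0
  apply hirr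
  refine ⟨(P : ℚ) / (Q : ℚ), ?_⟩
  have hQR : (Q : ℝ) ≠ 0 := Int.cast_ne_zero.mpr hQ
  push_cast
  field_simp
  linarith

lemma irr_lin_coeffs {x : ℝ} (hirr : Irrational x) {B C : ℤ}
    (h : (B : ℝ) * x + (C : ℝ) = 0) : B = 0 ∧ C = 0 := by
  by_cases hB : B = 0
  · refine ⟨hB, ?_⟩
    rw [hB] at h
    simp at h
    exact_mod_cast h
  · exfalso
    apply hirr
    refine ⟨(-C : ℚ) / (B : ℚ), ?_⟩
    have hBR : (B : ℝ) ≠ 0 := Int.cast_ne_zero.mpr hB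
    push_cast
    field_simp
    linarith

/-- If the continued fraction expansion of a positive irrational x is eventually
periodic, then x is a quadratic irrational: A·x² + B·x + C = 0 for some integers
A, B, C with A ≠ 0. -/
theorem periodic_cf_quadratic (x : ℝ) (hx : 0 < x) (hirr : Irrational x)
    (m per : ℕ) (hper : 1 ≤ per) (h : ∀ k ≥ m, pq x (k + per) = pq x k) :
    ∃ A B C : ℤ, A ≠ 0 ∧ (A : ℝ) * x ^ 2 + (B : ℝ) * x + (C : ℝ) = 0 := by
  set t := cq x m with ht
  have htirr : Irrational t := cq_irr hirr m
  have htpos : 0 < t := cq_pos hx hirr m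
  -- pure periodicity of t
  have hper_t : ∀ j, pq t (j + per) = pq t j := by
    intro j
    calc pq t (j + per) = pq x (m + (j + per)) := (pq_add x m (j + per)).symm
      _ = pq x ((m + j) + per) := by rw [Nat.add_assoc]
      _ = pq x (m + j) := h (m + j) (Nat.le_add_right m j)
      _ = pq t j := pq_add x m j
  -- the fixed point property
  have hteq : cq t per = t := by
    apply eq_of_pq_eq (cq_irr htirr per) htirr
    intro k
    rw [← pq_add t per k, Nat.add_comm per k]
    exact hper_t k
  -- quadratic equation for t
  have hkey_t := cq_key htirr per
  rw [hteq] at hkey_t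
  set a : ℤ := cD t (per + 1) with ha
  set b : ℤ := cD t per - cN t (per + 1) with hb
  set c : ℤ := - cN t per with hc
  have ha1 : 1 ≤ a := by
    obtain ⟨j, hj⟩ : ∃ j, per + 1 = j + 2 := ⟨per - 1, by omega⟩
    rw [ha, hj]
    exact cD_ge_one htpos htirr j
  have hquad : (a : ℝ) * t ^ 2 + (b : ℝ) * t + (c : ℝ) = 0 := by
    rw [hb, hc]
    push_cast
    linear_combination hkey_t
  -- Möbius relation between x and t
  have hkeym := cq_key hirr m
  rw [← ht] at hkeym
  set Pm : ℤ := cN x m with hPm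
  set Pm1 : ℤ := cN x (m + 1) with hPm1
  set Qm : ℤ := cD x m with hQm
  set Qm1 : ℤ := cD x (m + 1) with hQm1
  have hdet : Pm1 * Qm - Pm * Qm1 = (-1 : ℤ) ^ m := cq_det x m
  have hdet_ne : ((-1 : ℤ) ^ m) ≠ 0 := pow_ne_zero m (by norm_num)
  have hD : x * (Qm1 : ℝ) - (Pm1 : ℝ) ≠ 0 := by
    by_cases hq : Qm1 = 0
    · have hP1 : Pm1 ≠ 0 := by
        intro h0
        rw [hq, h0] at hdet
        simp at hdet
        exact hdet_ne hdet.symm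
      rw [hq]
      simpa using fun h0 => hP1 (by exact_mod_cast h0 : Pm1 = 0)
    · exact irr_linear hirr hq
  have hN : t * (x * (Qm1 : ℝ) - (Pm1 : ℝ)) = (Pm : ℝ) - x * (Qm : ℝ) := by
    linear_combination hkeym
  set A : ℤ := a * Qm ^ 2 - b * Qm * Qm1 + c * Qm1 ^ 2 with hA_def
  set B : ℤ := -2 * a * Pm * Qm + b * (Pm * Qm1 + Pm1 * Qm) - 2 * c * Pm1 * Qm1 with hB_def
  set C : ℤ := a * Pm ^ 2 - b * Pm * Pm1 + c * Pm1 ^ 2 with hC_def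
  have hid : ∀ X : ℝ, (a : ℝ) * ((Pm : ℝ) - X * Qm) ^ 2
      + (b : ℝ) * ((Pm : ℝ) - X * Qm) * (X * Qm1 - Pm1)
      + (c : ℝ) * (X * Qm1 - Pm1) ^ 2 = (A : ℝ) * X ^ 2 + (B : ℝ) * X + (C : ℝ) := by
    intro X
    rw [hA_def, hB_def, hC_def]
    push_cast
    ring
  have hzero : (A : ℝ) * x ^ 2 + (B : ℝ) * x + (C : ℝ) = 0 := by
    rw [← hid x, ← hN]
    linear_combination ((x * (Qm1 : ℝ) - (Pm1 : ℝ)) ^ 2) * hquad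
  by_cases hA : A = 0
  · exfalso
    have hBC : (B : ℝ) * x + (C : ℝ) = 0 := by
      rw [hA] at hzero
      simpa using hzero
    obtain ⟨hB, hC⟩ := irr_lin_coeffs hirr hBC
    by_cases hq : Qm1 = 0
    · rw [hA_def, hq] at hA
      have hQmne : Qm ≠ 0 := by
        intro h0
        rw [hq, h0] at hdet
        simp at hdet
        exact hdet_ne hdet.symm
      have : a * Qm ^ 2 ≠ 0 := mul_ne_zero (by omega) (pow_ne_zero 2 hQmne)
      apply this
      linarith [hA]
    · have hQR : (Qm1 : ℝ) ≠ 0 := Int.cast_ne_zero.mpr hq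
      have h0 := hid ((Pm1 : ℝ) / (Qm1 : ℝ))
      rw [hA, hB, hC] at h0
      have hc1 : (Pm1 : ℝ) / (Qm1 : ℝ) * (Qm1 : ℝ) - (Pm1 : ℝ) = 0 := by
        field_simp
        ring
      rw [hc1] at h0
      simp only [mul_zero, zero_mul, zero_pow, add_zero, Int.cast_zero, mul_comm] at h0
      have haR : (a : ℝ) ≠ 0 := Int.cast_ne_zero.mpr (by omega)
      have hfac : (Pm : ℝ) - (Pm1 : ℝ) / (Qm1 : ℝ) * (Qm : ℝ) = 0 := by
        have := mul_eq_zero.mp (by linarith [h0] :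
          (a : ℝ) * ((Pm : ℝ) - (Pm1 : ℝ) / (Qm1 : ℝ) * (Qm : ℝ)) ^ 2 = 0)
        rcases this with h' | h'
        · exact absurd h' haR
        · exact pow_eq_zero_iff (by norm_num) |>.mp h'
      have hZR : (Pm : ℝ) * (Qm1 : ℝ) = (Pm1 : ℝ) * (Qm : ℝ) := by
        field_simp at hfac
        linarith [hfac]
      have hZ : Pm * Qm1 = Pm1 * Qm := by exact_mod_cast hZR
      rw [← hZ] at hdet
      simp at hdet
      exact hdet_ne hdet.symm
  · exact ⟨A, B, C, hA, hzero⟩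
end
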